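/- The map T ↦ M_T from Tr(ℕ) (trees on ℕ with the topology inherited from 2^{ℕ^{<ℕ}}) into the hyperspace K(2^ℕ) with the Vietoris topology is continuous. -/

import Mathlib

/-- A tree on `ℕ⁺` (positive naturals): a set of finite sequences closed under initial
segments. -/
def IsTree (T : Set (List ℕ+)) : Prop :=
  ∀ l ∈ T, ∀ l' : List ℕ+, l' <+: l → l' ∈ T

/-- The infinite branches `[T]` of a tree `T`. -/
def branches (T : Set (List ℕ+)) : Set (ℕ → ℕ+) :=
  {σ | ∀ k : ℕ, (List.ofFn fun i : Fin k => σ i) ∈ T}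

/-- `ν̃` for a finite sequence `ν = (n₁, …, nₖ)`: the set `{n₁, n₁+n₂, …, n₁+⋯+nₖ}` of its
partial sums. -/
def partialSums (ν : List ℕ+) : Set ℕ :=
  {s | ∃ k < ν.length, s = ((ν.take (k + 1)).map (fun p : ℕ+ => (p : ℕ))).sum}

/-- `ν̃` for an infinite sequence `ν = (n₁, n₂, …)`: the set `{n₁, n₁+n₂, …}`. -/
def partialSumsInf (ν : ℕ → ℕ+) : Set ℕ :=
  {s | ∃ k : ℕ, s = ∑ i ∈ Finset.range (k + 1), (ν i : ℕ)}

/-- Indicator function of a set of naturals, as an element of the Cantor space. -/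
noncomputable def setToBool (A : Set ℕ) : ℕ → Bool := fun n => decide (n ∈ A) (h := Classical.dec _)

/-- `M_T = { ν̃ : ν ∈ T ∪ [T] or |ν| ≤ 3 }`, as a collection of subsets of `ℕ` coded as
elements of Cantor space. -/
noncomputable def MT (T : Set (List ℕ+)) : Set (ℕ → Bool) :=
  (fun ν : List ℕ+ => setToBool (partialSums ν)) '' {ν | ν ∈ T ∨ ν.length ≤ 3} ∪
  (fun ν : ℕ → ℕ+ => setToBool (partialSumsInf ν)) '' branches T
/-- The space of trees on `ℕ⁺`, as a subspace of `2^{(ℕ⁺)^{<ℕ}}`. -/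
abbrev TreeSpace : Type :=
  {T : List ℕ+ → Bool // ∀ l l' : List ℕ+, T l = true → l' <+: l → T l' = true}

/-- The basic clopen cylinder `Δ_η` of the Cantor space determined by a finite binary
string `η`. -/
def cyl (η : List Bool) : Set (ℕ → Bool) :=
  {σ | ∀ i : Fin η.length, σ i = η.get i}

/-- The Vietoris-type topology on collections of subsets of Cantor space, generated by the
sets `{M : M ∩ Δ_η ≠ ∅}` and their complements. -/
def vietorisTop : TopologicalSpace (Set (ℕ → Bool)) :=
  TopologicalSpace.generateFrom
    ({S | ∃ η : List Bool, S = {M : Set (ℕ → Bool) | (M ∩ cyl η).Nonempty}} ∪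
     {S | ∃ η : List Bool, S = {M : Set (ℕ → Bool) | M ∩ cyl η = ∅}})

def pval (l : List ℕ+) : ℕ := (l.map (fun p : ℕ+ => (p : ℕ))).sum

lemma length_le_pval (l : List ℕ+) : l.length ≤ pval l := by
  induction l with
  | nil => simp [pval]
  | cons a l ih =>
    have ha : 1 ≤ (a : ℕ) := a.property
    simp only [pval, List.map_cons, List.sum_cons, List.length_cons] at *
    omega

lemma mem_le_pval {l : List ℕ+} {p : ℕ+} (h : p ∈ l) : (p : ℕ) ≤ pval l :=
  List.single_le_sum (fun x _ => Nat.zero_le x) _ (List.mem_map_of_mem h)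

lemma pval_take_ofFn (σ : ℕ → ℕ+) (N i : ℕ) (hi : i ≤ N) :
    pval ((List.ofFn fun j : Fin N => σ j).take i) = ∑ j ∈ Finset.range i, (σ j : ℕ) := by
  rw [pval, List.map_take, List.map_ofFn, List.sum_take_ofFn]
  rw [Finset.sum_filter]
  simp only [Function.comp]
  rw [Fin.sum_univ_eq_sum_range (fun j => if j < i then ((σ j : ℕ)) else 0)]
  rw [← Finset.sum_subset (Finset.range_subset_range.2 hi)]
  · exact Finset.sum_congr rfl fun x hx => by simp [Finset.mem_range.1 hx]
  · intro x hx hxi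
    simp only [Finset.mem_range] at hxi
    simp [if_neg hxi]

lemma mem_partialSums {l : List ℕ+} {s : ℕ} :
    s ∈ partialSums l ↔ ∃ k < l.length, s = pval (l.take (k + 1)) := Iff.rfl

lemma setToBool_eq_true {A : Set ℕ} {n : ℕ} : setToBool A n = true ↔ n ∈ A := by
  simp [setToBool]

lemma setToBool_congr {A B : Set ℕ} {n : ℕ} (h : n ∈ A ↔ n ∈ B) :
    setToBool A n = setToBool B n := by
  simp only [setToBool]
  exact decide_eq_decide.mpr h

lemma cyl_congr {η : List Bool} {x y : ℕ → Bool}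
    (h : ∀ i < η.length, x i = y i) (hx : x ∈ cyl η) : y ∈ cyl η := by
  intro i; rw [← h i i.isLt]; exact hx i

/-- Chop a finite sequence matching `η` down to one with all partial sums `< |η|`. -/
lemma chop {η : List Bool} (hN : 1 ≤ η.length) (l : List ℕ+)
    (hl : setToBool (partialSums l) ∈ cyl η) :
    ∃ l', l' <+: l ∧ pval l' < η.length ∧ setToBool (partialSums l') ∈ cyl η := by
  set N := η.length with hNdef
  classical
  set s : Finset ℕ := (Finset.range (l.length + 1)).filter (fun k => pval (l.take k) < N)
    with hs
  have h0 : 0 ∈ s := by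
    simp only [hs, Finset.mem_filter, Finset.mem_range]
    exact ⟨by omega, by simp [pval]; omega⟩
  set m := s.max' ⟨0, h0⟩ with hm
  have hmem := Finset.mem_filter.1 (s.max'_mem ⟨0, h0⟩)
  have hm1 : m < l.length + 1 := Finset.mem_range.1 hmem.1
  have hm2 : pval (l.take m) < N := hmem.2
  have hml : m ≤ l.length := by omega
  refine ⟨l.take m, List.take_prefix _ _, hm2, ?_⟩
  refine cyl_congr (fun i hi => setToBool_congr ?_) hl
  rw [mem_partialSums, mem_partialSums]
  constructor
  · rintro ⟨k, hk, rfl⟩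
    have hkm : k + 1 ≤ m := by
      apply Finset.le_max'
      rw [hs, Finset.mem_filter, Finset.mem_range]
      exact ⟨by omega, by rwa [← hNdef] at hi⟩
    refine ⟨k, ?_, ?_⟩
    · simpa [List.length_take] using (by omega : k < min m l.length)
    · rw [List.take_take, min_eq_left hkm]
  · rintro ⟨k, hk, rfl⟩
    rw [List.length_take] at hk
    refine ⟨k, by omega, ?_⟩
    rw [List.take_take, min_eq_left (by omega : k + 1 ≤ m)]

/-- agreement between a branch and its length-`N` prefix below `N`. -/
lemma branch_agree (σ : ℕ → ℕ+) (N i : ℕ) (hi : i < N) :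
    (i ∈ partialSumsInf σ ↔ i ∈ partialSums (List.ofFn fun j : Fin N => σ j)) := by
  constructor
  · rintro ⟨k, rfl⟩
    have hb : k + 1 ≤ ∑ j ∈ Finset.range (k + 1), (σ j : ℕ) := by
      calc k + 1 = ∑ _j ∈ Finset.range (k + 1), 1 := by simp
      _ ≤ _ := Finset.sum_le_sum fun j _ => (σ j).property
    have hkN : k + 1 ≤ N := by omega
    rw [mem_partialSums]
    refine ⟨k, by simpa using (by omega : k < N), (pval_take_ofFn σ N (k+1) hkN).symm⟩
  · intro h
    rw [mem_partialSums] at h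
    obtain ⟨k, hk, rfl⟩ := h
    rw [List.length_ofFn] at hk
    exact ⟨k, pval_take_ofFn σ N (k+1) (by omega)⟩

/-- Finiteness of the set of sequences with bounded total sum. -/
lemma finite_pval_lt (N : ℕ) : {l : List ℕ+ | pval l < N}.Finite := by
  classical
  set g : ℕ+ → Fin (N + 1) := fun p => ⟨min (p : ℕ) N, by omega⟩ with hg
  have key : ∀ l ∈ {l : List ℕ+ | pval l < N},
      (l.map g).map (fun x : Fin (N + 1) => (x : ℕ)) = l.map (fun p : ℕ+ => (p : ℕ)) := by
    intro l hl
    rw [List.map_map]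
    apply List.map_congr_left
    intro p hp
    have : (p : ℕ) ≤ pval l := mem_le_pval hp
    simp only [Set.mem_setOf_eq] at hl
    simp only [Function.comp, hg]
    omega
  have hinj : Set.InjOn (fun l : List ℕ+ => l.map g) {l | pval l < N} := by
    intro l₁ h₁ l₂ h₂ he
    have : l₁.map (fun p : ℕ+ => (p : ℕ)) = l₂.map (fun p : ℕ+ => (p : ℕ)) := by
      rw [← key l₁ h₁, ← key l₂ h₂]
      exact congrArg _ he
    exact List.map_injective_iff.2 (fun a b hab => PNat.coe_injective hab) this
  apply Set.Finite.of_finite_image ?_ hinj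
  apply Set.Finite.subset (List.finite_length_lt (Fin (N + 1)) N)
  rintro _ ⟨l, hl, rfl⟩
  simp only [Set.mem_setOf_eq, List.length_map] at *
  have := length_le_pval l
  omega

lemma eval_clopen (ν : List ℕ+) : IsClopen {T : TreeSpace | T.1 ν = true} := by
  have h : {T : TreeSpace | T.1 ν = true} = (fun T : TreeSpace => T.1 ν) ⁻¹' {true} := rfl
  rw [h]
  exact (isClopen_discrete {true}).preimage ((continuous_apply ν).comp continuous_subtype_val)

lemma key (η : List Bool) :
    IsClopen {T : TreeSpace | (MT {l | T.1 l = true} ∩ cyl η).Nonempty} := by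
  classical
  by_cases hQ : ∃ ν : List ℕ+, ν.length ≤ 3 ∧ setToBool (partialSums ν) ∈ cyl η
  · obtain ⟨ν, h3, hν⟩ := hQ
    have h : {T : TreeSpace | (MT {l | T.1 l = true} ∩ cyl η).Nonempty} = Set.univ := by
      ext T
      simp only [Set.mem_setOf_eq, Set.mem_univ, iff_true]
      exact ⟨_, Set.mem_union_left _ ⟨ν, Or.inr h3, rfl⟩, hν⟩
    rw [h]; exact isClopen_univ
  · have hN : 1 ≤ η.length := by
      by_contra h
      exact hQ ⟨[], by simp, fun i => absurd i.isLt (by omega)⟩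
    have hset : {T : TreeSpace | (MT {l | T.1 l = true} ∩ cyl η).Nonempty} =
        ⋃ ν ∈ {l : List ℕ+ | pval l < η.length ∧ setToBool (partialSums l) ∈ cyl η},
          {T : TreeSpace | T.1 ν = true} := by
      ext T
      simp only [Set.mem_setOf_eq, Set.mem_iUnion, exists_prop]
      constructor
      · rintro ⟨x, hxM, hxc⟩
        rcases hxM with ⟨ν, hν, rfl⟩ | ⟨σ, hσ, rfl⟩
        · rcases hν with hνT | h3
          · obtain ⟨l', hpre, hlt, hc⟩ := chop hN ν hxc
            exact ⟨l', ⟨hlt, hc⟩, T.2 ν l' hνT hpre⟩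
          · exact absurd ⟨ν, h3, hxc⟩ hQ
        · have hp : T.1 (List.ofFn fun i : Fin η.length => σ i) = true := hσ η.length
          have hxc' : setToBool (partialSums (List.ofFn fun i : Fin η.length => σ i)) ∈ cyl η :=
            cyl_congr (fun i hi => setToBool_congr (branch_agree σ η.length i hi)) hxc
          obtain ⟨l', hpre, hlt, hc⟩ := chop hN _ hxc'
          exact ⟨l', ⟨hlt, hc⟩, T.2 _ l' hp hpre⟩
      · rintro ⟨ν, ⟨hlt, hc⟩, hT⟩
        exact ⟨_, Set.mem_union_left _ ⟨ν, Or.inl hT, rfl⟩, hc⟩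
    rw [hset]
    exact Set.Finite.isClopen_biUnion
      ((finite_pval_lt η.length).subset fun l hl => hl.1)
      fun ν _ => eval_clopen ν

/-- The map `T ↦ M_T` from the space of trees on `ℕ⁺` into the hyperspace `K(2^ℕ)` (with
the Vietoris topology, generated by the sets `{M : M ∩ Δ_η ≠ ∅}` and their complements)
is continuous. -/
theorem stmt14 :
    @Continuous TreeSpace (Set (ℕ → Bool)) _ vietorisTop
      (fun T => MT {l : List ℕ+ | T.1 l = true}) := by
  unfold vietorisTop
  rw [continuous_generateFrom_iff]
  rintro s (⟨η, rfl⟩ | ⟨η, rfl⟩)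
  · exact (key η).isOpen
  · have h : (fun T : TreeSpace => MT {l | T.1 l = true}) ⁻¹' {M | M ∩ cyl η = ∅} =
        {T : TreeSpace | (MT {l | T.1 l = true} ∩ cyl η).Nonempty}ᶜ := by
      ext T
      simp [Set.not_nonempty_iff_eq_empty]
    rw [h]
    exact (key η).compl.isOpen
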